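/- Consider an irreducible WS lifting cascade starting from the lazy wavelet (B_0 = 1, B_1 = z), with alternating upper/lower triangular lifting steps having HS lifting filters of support radii t^(0), ..., t^(N−1) ≥ 1. Then for each n ≥ 0, the intermediate scalar filters E^(n)_0 and E^(n)_1 have support intervals centered at 0 and −1 respectively, with support radii satisfying r^(n)_{m_n} = r^(n)_{1−m_n} + 2t^(n) − 1, where m_n is the update characteristic of step n, and r^(0)_{1−m_0} = 0. -/

import Mathlib

noncomputable section

/-- FIR filters: Laurent polynomials over ℝ, `F(z) = Σ f(n) z^{-n}`,
represented by their coefficient function `n ↦ f n`; multiplication is convolution. -/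
abbrev Filt := AddMonoidAlgebra ℝ ℤ

/-- `SuppInt f a b` : the support interval of `f` is `[a,b]` (so `f` is a
nonzero FIR filter with `f a, f b ≠ 0` and all support in `[a,b]`). -/
def SuppInt (f : Filt) (a b : ℤ) : Prop :=
  f.coeff a ≠ 0 ∧ f.coeff b ≠ 0 ∧ ∀ n, f.coeff n ≠ 0 → a ≤ n ∧ n ≤ b

/-- Upsampling: `F(z) ↦ F(z²)`, i.e. `Σ f(n) z^{-2n}`. -/
def up (f : Filt) : Filt := AddMonoidAlgebra.ofCoeff (Finsupp.mapDomain (fun n : ℤ => 2 * n) f.coeff)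

lemma suppInt_single (c : ℤ) : SuppInt (AddMonoidAlgebra.single c (1 : ℝ)) c c := by
  refine ⟨by simp, by simp, fun n hn => ?_⟩
  rcases eq_or_ne c n with rfl | h
  · omega
  · rw [AddMonoidAlgebra.coeff_single, Finsupp.single_apply, if_neg h] at hn
    exact absurd rfl hn

lemma up_apply_two (f : Filt) (n : ℤ) : (up f).coeff (2 * n) = f.coeff n :=
  Finsupp.mapDomain_apply (fun a b h => by omega) f.coeff n

lemma suppInt_up {f : Filt} {a b : ℤ} (h : SuppInt f a b) :
    SuppInt (up f) (2 * a) (2 * b) := by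
  classical
  refine ⟨by rw [up_apply_two]; exact h.1, by rw [up_apply_two]; exact h.2.1, fun n hn => ?_⟩
  have hn' : n ∈ (up f).coeff.support := Finsupp.mem_support_iff.2 hn
  have hsub := Finsupp.mapDomain_support (f := fun n : ℤ => 2 * n) (s := f.coeff)
  obtain ⟨k, hk, hkn⟩ := Finset.mem_image.1 (hsub hn')
  have := h.2.2 k (Finsupp.mem_support_iff.1 hk)
  omega

lemma suppInt_mul {f g : Filt} {a b c d : ℤ} (hf : SuppInt f a b) (hg : SuppInt g c d) :
    SuppInt (f * g) (a + c) (b + d) := by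
  classical
  have hlo : (f * g).coeff (a + c) = f.coeff a * g.coeff c := by
    refine AddMonoidAlgebra.coeff_mul_add_of_uniqueAdd ?_
    intro x y hx hy hxy
    have h1 := hf.2.2 x (Finsupp.mem_support_iff.1 hx)
    have h2 := hg.2.2 y (Finsupp.mem_support_iff.1 hy)
    constructor <;> omega
  have hhi : (f * g).coeff (b + d) = f.coeff b * g.coeff d := by
    refine AddMonoidAlgebra.coeff_mul_add_of_uniqueAdd ?_
    intro x y hx hy hxy
    have h1 := hf.2.2 x (Finsupp.mem_support_iff.1 hx)
    have h2 := hg.2.2 y (Finsupp.mem_support_iff.1 hy)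
    constructor <;> omega
  refine ⟨by rw [hlo]; exact mul_ne_zero hf.1 hg.1,
    by rw [hhi]; exact mul_ne_zero hf.2.1 hg.2.1, fun n hn => ?_⟩
  have hn' : n ∈ (f * g).coeff.support := Finsupp.mem_support_iff.2 hn
  have hsub := AddMonoidAlgebra.support_coeff_mul_subset f g
  obtain ⟨x, hx, y, hy, hxy⟩ := Finset.mem_add.1 (hsub hn')
  have h1 := hf.2.2 x (Finsupp.mem_support_iff.1 hx)
  have h2 := hg.2.2 y (Finsupp.mem_support_iff.1 hy)
  omega

lemma suppInt_add {f g : Filt} {a b a' b' : ℤ}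
    (hf : ∀ n, f.coeff n ≠ 0 → a' ≤ n ∧ n ≤ b') (hg : SuppInt g a b)
    (h1 : a < a') (h2 : b' < b) : SuppInt (f + g) a b := by
  have hfa : f.coeff a = 0 := by by_contra h; have := hf a h; omega
  have hfb : f.coeff b = 0 := by by_contra h; have := hf b h; omega
  have happ : ∀ n : ℤ, (f + g).coeff n = f.coeff n + g.coeff n := fun n => rfl
  refine ⟨?_, ?_, fun n hn => ?_⟩
  · rw [happ, hfa, zero_add]; exact hg.1
  · rw [happ, hfb, zero_add]; exact hg.2.1
  · by_cases hfn : f.coeff n = 0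
    · exact hg.2.2 n (by rwa [happ, hfn, zero_add] at hn)
    · have := hf n hfn; omega

lemma suppInt_congr {f : Filt} {a b a' b' : ℤ} (h : SuppInt f a b)
    (ha : a' = a) (hb : b' = b) : SuppInt f a' b' := by rw [ha, hb]; exact h

/-- the WS support interval formula.  For an irreducible WS lifting
cascade from the lazy wavelet (`B₀ = 1`, `B₁ = z`), with update characteristics
`m n` (`false` = upper/lowpass, `true` = lower/highpass) alternating, and HS
lifting filters `S n` of support radius `t n ≥ 1`, the intermediate filters
`P (n+1) false = E⁽ⁿ⁾₀` and `P (n+1) true = E⁽ⁿ⁾₁` are centered at `0` and `−1`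
respectively, with support radii satisfying
`r⁽ⁿ⁾_{mₙ} = r⁽ⁿ⁾_{1−mₙ} + 2 tⁿ − 1` and `r⁽⁰⁾_{1−m₀} = 0`. -/
theorem ws_support_formula (N : ℕ) (S : ℕ → Filt) (m : ℕ → Bool) (t : ℕ → ℤ)
    (P : ℕ → Bool → Filt)
    (halt : ∀ n, m (n + 1) = !(m n))
    (ht : ∀ n, n < N → 1 ≤ t n)
    (hSsym : ∀ n, n < N → ∀ k : ℤ,
      (S n).coeff k = cond (m n) ((S n).coeff (-1 - k)) ((S n).coeff (1 - k)))
    (hSsupp : ∀ n, n < N →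
      cond (m n) (SuppInt (S n) (-(t n)) (t n - 1))
                 (SuppInt (S n) (-(t n) + 1) (t n)))
    (hbase0 : P 0 false = AddMonoidAlgebra.single 0 1)
    (hbase1 : P 0 true = AddMonoidAlgebra.single (-1) 1)
    (hlift : ∀ n, n < N → P (n + 1) (m n) = P n (m n) + up (S n) * P n (!(m n)))
    (hkeep : ∀ n, n < N → P (n + 1) (!(m n)) = P n (!(m n))) :
    ∀ n, n < N → ∃ r0 r1 : ℤ,
      SuppInt (P (n + 1) false) (-r0) r0 ∧
      SuppInt (P (n + 1) true) (-r1 - 1) (r1 - 1) ∧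
      cond (m n) r1 r0 = cond (m n) r0 r1 + 2 * t n - 1 ∧
      (n = 0 → cond (m 0) r0 r1 = 0) := by
  have key : ∀ n, n ≤ N → ∃ r0 r1 : ℤ, 0 ≤ r0 ∧ 0 ≤ r1 ∧
      SuppInt (P n false) (-r0) r0 ∧ SuppInt (P n true) (-r1 - 1) (r1 - 1) ∧
      (n = 0 → r0 = 0 ∧ r1 = 0) ∧
      ∀ k, n = k + 1 →
        (cond (m k) r1 r0 = cond (m k) r0 r1 + 2 * t k - 1 ∧
         cond (m k) r0 r1 < cond (m k) r1 r0 ∧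
         (k = 0 → cond (m 0) r0 r1 = 0)) := by
    intro n
    induction n with
    | zero =>
      intro _
      refine ⟨0, 0, le_refl 0, le_refl 0, ?_, ?_, fun _ => ⟨rfl, rfl⟩, fun k hk => by omega⟩
      · rw [hbase0]; exact suppInt_congr (suppInt_single 0) (by ring) rfl
      · rw [hbase1]; exact suppInt_congr (suppInt_single (-1)) (by ring) (by ring)
    | succ n ih =>
      intro hn
      obtain ⟨r0, r1, hr0, hr1, h0, h1, hbase, hstep⟩ := ih (by omega)
      have hnN : n < N := by omega
      have htn := ht n hnN
      have hS := hSsupp n hnN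
      have hL := hlift n hnN
      have hK := hkeep n hnN
      -- strictness: current radius of updated component < its new radius
      have hlt : cond (m n) r1 r0 < cond (m n) r0 r1 + 2 * t n - 1 := by
        rcases Nat.eq_zero_or_pos n with h | h
        · subst h
          obtain ⟨e0, e1⟩ := hbase rfl
          subst e0; subst e1
          cases m 0 <;> simp <;> omega
        · obtain ⟨k, rfl⟩ : ∃ k, n = k + 1 := ⟨n - 1, by omega⟩
          have hmk := halt k
          have hs := (hstep k rfl).2.1
          cases hm : m k <;> rw [hm] at hmk hs <;> rw [hmk] <;>
            simp only [Bool.not_false, Bool.not_true, Bool.cond_true, Bool.cond_false] at hs ⊢ <;>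
            omega
      cases hm : m n
      · -- upper step: update the false (lowpass) component
        rw [hm] at hS hL hK hlt
        simp only [Bool.not_false, Bool.cond_false] at hS hL hK hlt
        refine ⟨r1 + 2 * t n - 1, r1, by omega, hr1, ?_, ?_, fun h => by omega, ?_⟩
        · rw [hL]
          refine suppInt_add h0.2.2 ?_ (by omega) (by omega)
          exact suppInt_congr (suppInt_mul (suppInt_up hS) h1) (by ring) (by ring)
        · rw [hK]; exact h1
        · intro k hk
          obtain rfl : k = n := by omega
          rw [hm]
          simp only [Bool.cond_false]
          refine ⟨trivial, by omega, fun h => ?_⟩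
          subst h
          rw [hm]
          simp only [Bool.cond_false]
          exact (hbase rfl).2
      · -- lower step: update the true (highpass) component
        rw [hm] at hS hL hK hlt
        simp only [Bool.not_true, Bool.cond_true] at hS hL hK hlt
        refine ⟨r0, r0 + 2 * t n - 1, hr0, by omega, ?_, ?_, fun h => by omega, ?_⟩
        · rw [hK]; exact h0
        · rw [hL]
          refine suppInt_add h1.2.2 ?_ (by omega) (by omega)
          exact suppInt_congr (suppInt_mul (suppInt_up hS) h0) (by ring) (by ring)
        · intro k hk
          obtain rfl : k = n := by omega
          rw [hm]
          simp only [Bool.cond_true]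
          refine ⟨trivial, by omega, fun h => ?_⟩
          subst h
          rw [hm]
          simp only [Bool.cond_true]
          exact (hbase rfl).1
  intro n hn
  obtain ⟨r0, r1, _, _, hf, ht', _, hstep⟩ := key (n + 1) (by omega)
  obtain ⟨heq, _, hzero⟩ := hstep n rfl
  exact ⟨r0, r1, hf, ht', heq, fun h => hzero h⟩
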